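/- Let k ∈ ℂ and let p, q ∈ ℂ[X] be nonzero polynomials that are squarefree and coprime. Then the following are equivalent: (i) there exist a, b ∈ ℂ[X] with b ≠ 0 and ((a'·b − a·b') + k·a·b)·q² = p·b², and there exist c, d ∈ ℂ[X] with d ≠ 0 and ((c'·d − c·d') − 2k·c·d)·p² = q⁴·d²; (ii) {p,q}_2 + 2k·(p'·q − 2·q'·p) = 0. (Condition (i) expresses that exp(−kz)∫(p/q²)e^{kz}dz and exp(2kz)∫(q⁴/p²)e^{−2kz}dz are rational functions: a rational f satisfies f' + kf = p/q² iff the first identity holds with f = a/b, and a rational g satisfies g' − 2kg = q⁴/p² iff the second holds with g = c/d.) -/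

import Mathlib

open Polynomial

private lemma antideriv (s : ℂ[X]) : ∃ w : ℂ[X], derivative w = s := by
  induction s using Polynomial.induction_on' with
  | add f g hf hg =>
    obtain ⟨wf, hwf⟩ := hf; obtain ⟨wg, hwg⟩ := hg
    exact ⟨wf + wg, by simp [hwf, hwg]⟩
  | monomial n a =>
    refine ⟨C (a / (n + 1)) * X ^ (n + 1), ?_⟩
    rw [derivative_C_mul, derivative_X_pow, ← C_mul_X_pow_eq_monomial]
    rw [Nat.add_sub_cancel, ← mul_assoc, ← C_mul]
    push_cast
    rw [div_mul_cancel₀]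
    exact Nat.cast_add_one_ne_zero n

private lemma ode_solve (κ : ℂ) (s : ℂ[X]) : ∃ w : ℂ[X], derivative w + C κ * w = s := by
  rcases eq_or_ne κ 0 with rfl | hκ
  · obtain ⟨w, hw⟩ := antideriv s
    exact ⟨w, by simp [hw]⟩
  · suffices h : ∀ n (s : ℂ[X]), s.natDegree ≤ n → ∃ w : ℂ[X], derivative w + C κ * w = s from
      h s.natDegree s le_rfl
    intro n
    induction n with
    | zero =>
      intro s hs
      refine ⟨C (s.coeff 0 / κ), ?_⟩
      conv_rhs => rw [eq_C_of_natDegree_le_zero hs]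
      rw [derivative_C, ← C_mul, mul_div_cancel₀ _ hκ, zero_add]
    | succ n ih =>
      intro s hs
      obtain ⟨w₀, hw₀⟩ := ih (derivative s) (by
        have := natDegree_derivative_le s; omega)
      refine ⟨C κ⁻¹ * (s - w₀), ?_⟩
      have hinv : C κ⁻¹ * C κ = 1 := by rw [← C_mul, inv_mul_cancel₀ hκ, C_1]
      rw [derivative_C_mul, derivative_sub]
      linear_combination (-(C κ⁻¹)) * hw₀ + s * hinv

private lemma keyY (κ : ℂ) (s P : ℂ[X]) (hco : IsCoprime s (derivative s))
    (hdvd : s ∣ (derivative P * derivative s - P * derivative (derivative s)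
      + C κ * P * derivative s)) :
    ∃ u : ℂ[X], derivative u * s - u * derivative s + C κ * u * s = P := by
  obtain ⟨x, y, hxy⟩ := hco
  have hxyd : derivative x * s + x * derivative s + derivative y * derivative s
      + y * derivative (derivative s) = 0 := by
    have h := congrArg derivative hxy
    rw [derivative_add, derivative_mul, derivative_mul, derivative_one] at h
    linear_combination h
  obtain ⟨T, hT⟩ := hdvd
  -- s'^2 * Z = V - s * W₂
  have hkey : (derivative s) ^ 2 * (derivative P * y + P * derivative y + C κ * P * y + P * x)
      = (derivative P * derivative s - P * derivative (derivative s) + C κ * P * derivative s)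
        - s * ((derivative P * x + P * derivative x) * derivative s
            - P * x * derivative (derivative s) + C κ * P * x * derivative s) := by
    linear_combination (derivative P * derivative s + C κ * P * derivative s
      - P * derivative (derivative s)) * hxy + P * derivative s * hxyd
  have hcop : IsCoprime s ((derivative s) ^ 2) := (show IsCoprime s (derivative s) from ⟨x, y, hxy⟩).pow_right
  have hdvd2 : s ∣ (derivative P * y + P * derivative y + C κ * P * y + P * x) := by
    refine hcop.dvd_of_dvd_mul_left ?_
    refine ⟨T - ((derivative P * x + P * derivative x) * derivative s
      - P * x * derivative (derivative s) + C κ * P * x * derivative s), ?_⟩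
    rw [mul_comm ((derivative s) ^ 2)] at hkey
    linear_combination hkey + hT
  obtain ⟨w₁, hw₁⟩ := hdvd2
  obtain ⟨w, hw⟩ := ode_solve κ w₁
  refine ⟨-(P * y) + s * w, ?_⟩
  rw [derivative_add, derivative_neg, derivative_mul, derivative_mul]
  linear_combination s ^ 2 * hw - s * hw₁ + P * hxy

private lemma dvd_of_roots_sub (s V : ℂ[X]) (hs : s ≠ 0) (hss : Squarefree s)
    (h : ∀ α : ℂ, s.eval α = 0 → V.eval α = 0) : s ∣ V := by
  rcases eq_or_ne V 0 with rfl | hV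
  · exact dvd_zero s
  have hsep : s.Separable := PerfectField.separable_iff_squarefree.mpr hss
  have hnodup : s.roots.Nodup := nodup_roots hsep
  refine (IsAlgClosed.splits s).dvd_of_roots_le_roots hs ?_
  rw [Multiset.le_iff_count]
  intro α
  classical
  rw [count_roots, count_roots]
  by_cases hr : s.IsRoot α
  · have h1 : rootMultiplicity α s ≤ 1 := by
      rw [← count_roots]
      exact Multiset.nodup_iff_count_le_one.mp hnodup α
    have h2 : 0 < rootMultiplicity α V := (rootMultiplicity_pos hV).mpr (h α hr)
    omega
  · simp [rootMultiplicity_eq_zero hr]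

private lemma coprime_parts (a b : ℂ[X]) (hb : b ≠ 0) :
    ∃ g a₀ b₀ : ℂ[X], g ≠ 0 ∧ a = g * a₀ ∧ b = g * b₀ ∧ IsCoprime a₀ b₀ := by
  classical
  set g := EuclideanDomain.gcd a b with hg
  have hgne : g ≠ 0 := by
    intro h0
    rw [hg, EuclideanDomain.gcd_eq_zero_iff] at h0
    exact hb h0.2
  obtain ⟨a₀, ha₀⟩ : g ∣ a := EuclideanDomain.gcd_dvd_left a b
  obtain ⟨b₀, hb₀⟩ : g ∣ b := EuclideanDomain.gcd_dvd_right a b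
  refine ⟨g, a₀, b₀, hgne, ha₀, hb₀, ?_⟩
  have hbez : g = a * EuclideanDomain.gcdA a b + b * EuclideanDomain.gcdB a b :=
    EuclideanDomain.gcd_eq_gcd_ab a b
  refine ⟨EuclideanDomain.gcdA a b, EuclideanDomain.gcdB a b, ?_⟩
  have : g * 1 = g * (EuclideanDomain.gcdA a b * a₀ + EuclideanDomain.gcdB a b * b₀) := by
    rw [mul_one]
    nth_rewrite 1 [hbez]
    rw [ha₀, hb₀]; ring
  have := mul_left_cancel₀ hgne this
  linear_combination -this

private lemma keyX (w r s a b : ℂ[X]) (hr : r ≠ 0) (hb : b ≠ 0)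
    (hss : IsCoprime s (derivative s)) (hrs : IsCoprime r s) (hab : IsCoprime a b)
    (hE : (derivative a * b - a * derivative b + w * a * b) * s ^ 2 = r * b ^ 2)
    {α : ℂ} (hα : s.eval α = 0) :
    (derivative r * derivative s - r * derivative (derivative s)
      + w * r * derivative s).eval α = 0 := by
  -- basic nonvanishing facts
  have hs'α : eval α (derivative s) ≠ 0 := by
    obtain ⟨xs, ys, hxys⟩ := hss
    have h := congrArg (eval α) hxys
    simp only [eval_add, eval_mul, eval_one, hα, mul_zero, zero_add] at h
    exact right_ne_zero_of_mul_eq_one h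
  have hrα : eval α r ≠ 0 := by
    obtain ⟨xr, yr, hxyr⟩ := hrs
    have h := congrArg (eval α) hxyr
    simp only [eval_add, eval_mul, eval_one, hα, mul_zero, add_zero] at h
    exact fun h0 => by simp [h0] at h
  have hbα : eval α b = 0 := by
    have h := congrArg (eval α) hE
    simp only [eval_mul, eval_pow, eval_sub, eval_add, hα] at h
    have h' : eval α r * eval α b ^ 2 = 0 := by linear_combination -h
    rcases mul_eq_zero.mp h' with h'' | h''
    · exact absurd h'' hrα
    · exact pow_eq_zero_iff (two_ne_zero) |>.mp h''
  have haα : eval α a ≠ 0 := by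
    obtain ⟨xa, ya, hxya⟩ := hab
    have h := congrArg (eval α) hxya
    simp only [eval_add, eval_mul, eval_one, hbα, mul_zero, add_zero] at h
    exact fun h0 => by simp [h0] at h
  -- decompose s and b
  obtain ⟨Q, hsQ⟩ : ∃ Q, (X - C α) * Q = s := ⟨_, mul_divByMonic_eq_iff_isRoot.mpr hα⟩
  have hs1 : derivative s = Q + (X - C α) * derivative Q := by
    have h := congrArg derivative hsQ
    rw [derivative_mul, derivative_X_sub_C] at h
    linear_combination -h
  have hQα : eval α Q ≠ 0 := by
    intro h0
    apply hs'α
    rw [hs1]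
    simp [h0]
  obtain ⟨m₀, B, hbB, hBα⟩ : ∃ (m₀ : ℕ) (B : ℂ[X]), (X - C α) ^ (m₀ + 1) * B = b ∧ eval α B ≠ 0 := by
    refine ⟨rootMultiplicity α b - 1, b /ₘ (X - C α) ^ (rootMultiplicity α b), ?_,
      eval_divByMonic_pow_rootMultiplicity_ne_zero α hb⟩
    have hpos : 0 < rootMultiplicity α b := (rootMultiplicity_pos hb).mpr hbα
    have hm : rootMultiplicity α b - 1 + 1 = rootMultiplicity α b := by omega
    rw [hm]
    exact pow_mul_divByMonic_rootMultiplicity_eq b α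
  rw [← hbB, ← hsQ] at hE
  rw [derivative_mul, derivative_pow, derivative_X_sub_C] at hE
  simp only [Nat.add_sub_cancel, mul_one, Nat.cast_add, Nat.cast_one, C_add, C_1] at hE
  have hE2 : (X - C α) ^ (m₀ + 2) *
        (((X - C α) * (derivative a * B - a * derivative B + w * a * B)
          - (C (m₀ : ℂ) + 1) * a * B) * Q ^ 2)
      = (X - C α) ^ (m₀ + 1) * ((X - C α) ^ (m₀ + 1) * (r * B ^ 2)) := by
    linear_combination hE
  -- m₀ must be 0
  rcases Nat.eq_zero_or_pos m₀ with h0 | hposm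
  swap
  · exfalso
    obtain ⟨m₁, rfl⟩ : ∃ t, m₀ = t + 1 := ⟨m₀ - 1, by omega⟩
    have hc : (X - C α) ^ (m₁ + 1 + 2) *
          (((X - C α) * (derivative a * B - a * derivative B + w * a * B)
            - (C ((m₁ + 1 : ℕ) : ℂ) + 1) * a * B) * Q ^ 2)
        = (X - C α) ^ (m₁ + 1 + 2) * ((X - C α) ^ (m₁ + 1) * (r * B ^ 2)) := by
      linear_combination hE2
    have hcc := mul_left_cancel₀ (pow_ne_zero _ (X_sub_C_ne_zero α)) hc
    have h := congrArg (eval α) hcc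
    simp only [eval_mul, eval_pow, eval_sub, eval_add, eval_X, eval_C, eval_one, eval_zero,
      sub_self, zero_mul, pow_succ, mul_zero, zero_sub, neg_mul, neg_eq_zero, Nat.cast_add,
      Nat.cast_one, zero_add, one_mul] at h
    rcases mul_eq_zero.mp (by linear_combination h : (((m₁:ℂ) + 1 + 1) * eval α a * eval α B) * eval α Q ^ 2 = 0) with h' | h'
    · rcases mul_eq_zero.mp h' with h'' | h''
      · rcases mul_eq_zero.mp h'' with h3 | h3
        · have hne : ((m₁:ℂ) + 1 + 1) ≠ 0 := by
            have := Nat.cast_add_one_ne_zero (R := ℂ) (m₁ + 1)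
            push_cast at this
            exact this
          exact hne h3
        · exact haα h3
      · exact hBα h''
    · exact pow_ne_zero 2 hQα h'
  · subst h0
    simp only [Nat.cast_zero, C_0, zero_add] at hE2
    have hc : (X - C α) ^ 2 *
          (((X - C α) * (derivative a * B - a * derivative B + w * a * B) - a * B) * Q ^ 2)
        = (X - C α) ^ 2 * (r * B ^ 2) := by
      linear_combination hE2
    have hF := mul_left_cancel₀ (pow_ne_zero _ (X_sub_C_ne_zero α)) hc
    have hF' := congrArg derivative hF
    simp only [derivative_mul, derivative_sub, derivative_add, derivative_pow,
      derivative_X_sub_C, derivative_X, derivative_C, Nat.cast_ofNat, Nat.add_sub_cancel] at hF'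
    have he1 : -(eval α a * eval α B) * eval α Q ^ 2 = eval α r * eval α B ^ 2 := by
      have h := congrArg (eval α) hF
      simp only [eval_mul, eval_pow, eval_sub, eval_add, eval_X, eval_C] at h
      linear_combination h
    have he2 : (eval α w * eval α a * eval α B - 2 * eval α a * eval α (derivative B))
          * eval α Q ^ 2 - 2 * eval α a * eval α B * eval α Q * eval α (derivative Q)
        = eval α (derivative r) * eval α B ^ 2
          + 2 * eval α r * eval α B * eval α (derivative B) := by
      have h := congrArg (eval α) hF'
      simp only [eval_mul, eval_pow, eval_sub, eval_add, eval_X, eval_C, eval_one, eval_zero] at h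
      linear_combination h
    have hf1 : eval α r * eval α B = -(eval α a * eval α Q ^ 2) :=
      mul_left_cancel₀ hBα (by linear_combination -he1)
    have hkey2 : eval α a ^ 2 * eval α Q ^ 3 *
        (eval α (derivative r) * eval α Q - 2 * eval α r * eval α (derivative Q)
          + eval α w * eval α r * eval α Q) = 0 := by
      linear_combination (-(eval α r ^ 2)) * he2 +
        (eval α w * eval α a * eval α r * eval α Q ^ 2
          - 2 * eval α a * eval α r * eval α Q * eval α (derivative Q)
          - eval α (derivative r) * eval α B * eval α r
          + eval α (derivative r) * eval α a * eval α Q ^ 2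
          - 2 * eval α (derivative B) * eval α r ^ 2) * hf1
    have hzero : eval α (derivative r) * eval α Q - 2 * eval α r * eval α (derivative Q)
        + eval α w * eval α r * eval α Q = 0 := by
      rcases mul_eq_zero.mp hkey2 with h' | h'
      · exact absurd h' (mul_ne_zero (pow_ne_zero 2 haα) (pow_ne_zero 3 hQα))
      · exact h'
    have hs2 : derivative (derivative s) = 2 * derivative Q + (X - C α) * derivative (derivative Q) := by
      have h := congrArg derivative hs1
      rw [derivative_add, derivative_mul, derivative_X_sub_C] at h
      linear_combination h
    rw [hs2, hs1]
    simp only [eval_mul, eval_pow, eval_sub, eval_add, eval_X, eval_C, eval_ofNat]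
    linear_combination hzero

private lemma existence_to_dvd (w r s : ℂ[X]) (hr : r ≠ 0) (hs : s ≠ 0)
    (hss : Squarefree s) (hrs : IsCoprime r s)
    (h : ∃ a b : ℂ[X], b ≠ 0 ∧
      (derivative a * b - a * derivative b + w * a * b) * s ^ 2 = r * b ^ 2) :
    s ∣ (derivative r * derivative s - r * derivative (derivative s)
      + w * r * derivative s) := by
  obtain ⟨a, b, hb, hE⟩ := h
  obtain ⟨g, a₀, b₀, hg, ha, hbg, hcop⟩ := coprime_parts a b hb
  have hb₀ : b₀ ≠ 0 := fun h0 => hb (by rw [hbg, h0, mul_zero])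
  have hE₀ : (derivative a₀ * b₀ - a₀ * derivative b₀ + w * a₀ * b₀) * s ^ 2 = r * b₀ ^ 2 := by
    apply mul_left_cancel₀ (pow_ne_zero 2 hg)
    rw [ha, hbg, derivative_mul, derivative_mul] at hE
    linear_combination hE
  have hsep : IsCoprime s (derivative s) := PerfectField.separable_iff_squarefree.mpr hss
  refine dvd_of_roots_sub _ _ hs hss (fun α hα => ?_)
  exact keyX w r s a₀ b₀ hr hb₀ hsep hrs hcop hE₀ hα

private lemma deg_aux (f g c : ℂ[X]) (hc : natDegree c = 0) :
    natDegree (derivative f * (c * g)) ≤ natDegree f + natDegree g - 1 := by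
  rcases eq_or_ne (natDegree f) 0 with h0 | h0
  · have hdf : derivative f = 0 := by
      rw [eq_C_of_natDegree_eq_zero h0, derivative_C]
    simp [hdf]
  · calc natDegree (derivative f * (c * g))
        ≤ natDegree (derivative f) + natDegree (c * g) := natDegree_mul_le
      _ ≤ natDegree (derivative f) + (natDegree c + natDegree g) :=
          Nat.add_le_add_left natDegree_mul_le _
      _ ≤ natDegree f + natDegree g - 1 := by
          have := natDegree_derivative_le f
          omega

/-- Rationality of `exp(−kz)∫(p/q²)e^{kz}dz` and `exp(2kz)∫(q⁴/p²)e^{−2kz}dz`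
(for squarefree coprime `p, q`) is equivalent to
`{p,q}_2 + 2k(p'q − 2q'p) = 0`. -/
theorem rational_BA_integrals_iff_bilinear_field
    (k : ℂ) (p q : ℂ[X]) (hp : p ≠ 0) (hq : q ≠ 0)
    (hsp : Squarefree p) (hsq : Squarefree q) (hpq : IsCoprime p q) :
    ((∃ a b : ℂ[X], b ≠ 0 ∧
        ((derivative a * b - a * derivative b) + C k * a * b) * q ^ 2 = p * b ^ 2) ∧
     (∃ c d : ℂ[X], d ≠ 0 ∧
        ((derivative c * d - c * derivative d) - 2 * C k * c * d) * p ^ 2 = q ^ 4 * d ^ 2)) ↔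
    derivative (derivative p) * q - 4 * derivative p * derivative q
        + 4 * p * derivative (derivative q)
        + 2 * C k * (derivative p * q - 2 * derivative q * p) = 0 := by
  have hC2 : C (-(2*k)) = -(2 * C k : ℂ[X]) := by
    rw [map_neg, map_mul, map_ofNat]
  constructor
  · rintro ⟨h1, h2⟩
    have hA1 : q ∣ (derivative p * derivative q - p * derivative (derivative q)
        + C k * p * derivative q) := by
      refine existence_to_dvd (C k) p q hp hq hsq hpq ?_
      obtain ⟨a, b, hb, hE⟩ := h1
      exact ⟨a, b, hb, by linear_combination hE⟩
    have hA2 : p ∣ (derivative (q^4) * derivative p - q^4 * derivative (derivative p)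
        + (-(2 * C k)) * q^4 * derivative p) := by
      refine existence_to_dvd (-(2 * C k)) (q^4) p (pow_ne_zero 4 hq) hp hsp
        (hpq.symm.pow_left) ?_
      obtain ⟨c, d, hd, hE⟩ := h2
      exact ⟨c, d, hd, by linear_combination hE⟩
    -- p divides B₂
    have hdq4 : derivative (q^4) = 4 * q^3 * derivative q := by
      rw [derivative_pow]
      norm_num [map_ofNat]
    have hB2 : p ∣ (4 * derivative p * derivative q - q * derivative (derivative p)
        - 2 * C k * q * derivative p) := by
      have hco : IsCoprime p (q^3) := hpq.pow_right
      refine hco.dvd_of_dvd_mul_right ?_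
      obtain ⟨T, hT⟩ := hA2
      rw [hdq4] at hT
      exact ⟨T, by linear_combination hT⟩
    obtain ⟨T1, hT1⟩ := hA1
    obtain ⟨T2, hT2⟩ := hB2
    have hqW : q ∣ (derivative (derivative p) * q - 4 * derivative p * derivative q
        + 4 * p * derivative (derivative q)
        + 2 * C k * (derivative p * q - 2 * derivative q * p)) :=
      ⟨derivative (derivative p) + 2 * C k * derivative p - 4 * T1, by linear_combination (-4 : ℂ[X]) * hT1⟩
    have hpW : p ∣ (derivative (derivative p) * q - 4 * derivative p * derivative q
        + 4 * p * derivative (derivative q)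
        + 2 * C k * (derivative p * q - 2 * derivative q * p)) :=
      ⟨4 * derivative (derivative q) - 4 * C k * derivative q - T2, by linear_combination -hT2⟩
    have hpqW := (hpq.mul_dvd hpW hqW)
    rcases Nat.eq_zero_or_pos (natDegree p + natDegree q) with hd0 | hdpos
    · have hp0 : natDegree p = 0 := by omega
      have hq0 : natDegree q = 0 := by omega
      rw [eq_C_of_natDegree_eq_zero hp0, eq_C_of_natDegree_eq_zero hq0]
      simp
    · by_contra hW
      have hge := natDegree_le_of_dvd hpqW hW
      rw [natDegree_mul hp hq] at hge
      set n := natDegree p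
      set m := natDegree q
      have hWeq : derivative (derivative p) * q - 4 * derivative p * derivative q
          + 4 * p * derivative (derivative q)
          + 2 * C k * (derivative p * q - 2 * derivative q * p)
          = derivative (derivative p) * (1 * q) + derivative p * (-(4:ℂ[X]) * derivative q)
            + derivative (derivative q) * (4 * p) + derivative p * ((2 * C k) * q)
            + derivative q * ((-(4:ℂ[X]) * C k) * p) := by ring
      have hb1 : natDegree (derivative (derivative p) * (1 * q)) ≤ n + m - 1 := by
        have h := deg_aux (derivative p) q 1 natDegree_one
        have h2 := natDegree_derivative_le p
        omega
      have hb2 : natDegree (derivative p * (-(4:ℂ[X]) * derivative q)) ≤ n + m - 1 := by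
        have h := deg_aux p (derivative q) (-(4:ℂ[X])) (by simp)
        have h2 := natDegree_derivative_le q
        omega
      have hb3 : natDegree (derivative (derivative q) * (4 * p)) ≤ n + m - 1 := by
        have h := deg_aux (derivative q) p 4 (by simp)
        have h2 := natDegree_derivative_le q
        omega
      have hb4 : natDegree (derivative p * ((2 * C k) * q)) ≤ n + m - 1 := by
        have h := deg_aux p q (2 * C k) ?_
        · omega
        · have : natDegree (2 * C k : ℂ[X]) ≤ 0 := by
            calc natDegree (2 * C k : ℂ[X]) ≤ natDegree (2:ℂ[X]) + natDegree (C k) :=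
              natDegree_mul_le
            _ ≤ 0 := by simp
          omega
      have hb5 : natDegree (derivative q * ((-(4:ℂ[X]) * C k) * p)) ≤ n + m - 1 := by
        have h := deg_aux q p (-(4:ℂ[X]) * C k) ?_
        · omega
        · have : natDegree (-(4:ℂ[X]) * C k) ≤ 0 := by
            calc natDegree (-(4:ℂ[X]) * C k) ≤ natDegree (-(4:ℂ[X])) + natDegree (C k) :=
              natDegree_mul_le
            _ ≤ 0 := by simp
          omega
      have hlt : natDegree (derivative (derivative p) * q - 4 * derivative p * derivative q
          + 4 * p * derivative (derivative q)
          + 2 * C k * (derivative p * q - 2 * derivative q * p)) ≤ n + m - 1 := by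
        rw [hWeq]
        exact le_trans (natDegree_add_le _ _) (max_le (le_trans (natDegree_add_le _ _)
          (max_le (le_trans (natDegree_add_le _ _) (max_le (le_trans (natDegree_add_le _ _)
            (max_le hb1 hb2)) hb3)) hb4)) hb5)
      omega
  · intro hW
    have hsepq : IsCoprime q (derivative q) := PerfectField.separable_iff_squarefree.mpr hsq
    have hsepp : IsCoprime p (derivative p) := PerfectField.separable_iff_squarefree.mpr hsp
    have h4 : (C (4⁻¹:ℂ) * 4 : ℂ[X]) = 1 := by
      rw [show (4:ℂ[X]) = C 4 from (map_ofNat C 4).symm, ← C_mul]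
      norm_num
    constructor
    · have hA1' : (4:ℂ[X]) * (derivative p * derivative q - p * derivative (derivative q)
          + C k * p * derivative q)
          = q * (derivative (derivative p) + 2 * C k * derivative p) := by
        linear_combination -hW
      have hA1 : q ∣ (derivative p * derivative q - p * derivative (derivative q)
          + C k * p * derivative q) := by
        refine ⟨C (4⁻¹:ℂ) * (derivative (derivative p) + 2 * C k * derivative p), ?_⟩
        linear_combination C (4⁻¹:ℂ) * hA1'
          - (derivative p * derivative q - p * derivative (derivative q)
            + C k * p * derivative q) * h4
      obtain ⟨u, hu⟩ := keyY k q p hsepq hA1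
      exact ⟨u, q, hq, by linear_combination q^2 * hu⟩
    · have hdq4 : derivative (q^4) = 4 * q^3 * derivative q := by
        rw [derivative_pow]
        norm_num [map_ofNat]
      have hA2eq : derivative (q^4) * derivative p - q^4 * derivative (derivative p)
          + C (-(2*k)) * (q^4) * derivative p
          = p * (q^3 * (4 * derivative (derivative q) - 4 * C k * derivative q)) := by
        rw [hdq4, hC2]
        linear_combination (-(q^3)) * hW
      obtain ⟨v, hv⟩ := keyY (-(2*k)) p (q^4) hsepp ⟨_, hA2eq⟩
      rw [hC2] at hv
      exact ⟨v, p, hp, by linear_combination p^2 * hv⟩
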